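/- For every n ≥ 1 and every x ∈ [0, exp(-√n)], the function R_n(x) = x² r_n(x) built from Newman polynomials satisfies x² |r_n'(x)| ≤ 4n (1 - n^{-1/2})^{-2} e^{-√n} (for n ≥ 2 so that 1 - n^{-1/2} > 0). -/

import Mathlib

noncomputable def NewmanP (n : ℕ) (x : ℝ) : ℝ :=
  ∏ i ∈ Finset.range n, (x + (Real.exp (-(1 / Real.sqrt n))) ^ i)

noncomputable def newmanRat (n : ℕ) (x : ℝ) : ℝ :=
  (NewmanP n x - NewmanP n (-x)) / (NewmanP n x + NewmanP n (-x))

noncomputable def NewmanD (n : ℕ) (x : ℝ) : ℝ :=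
  ∑ j ∈ Finset.range n, ∏ i ∈ (Finset.range n).erase j,
    (x + (Real.exp (-(1 / Real.sqrt n))) ^ i)

lemma newmanP_hasDerivAt (n : ℕ) (x : ℝ) :
    HasDerivAt (NewmanP n) (NewmanD n x) x := by
  have h := HasDerivAt.fun_finsetProd (u := Finset.range n)
    (f := fun i y => y + (Real.exp (-(1 / Real.sqrt (n : ℝ)))) ^ i)
    (f' := fun _ => (1 : ℝ)) (x := x)
    (fun i _ => (hasDerivAt_id x).add_const _)
  simp only [smul_eq_mul, mul_one] at h
  exact h

theorem newman_rat_deriv_small_x_bound (n : ℕ) (hn : 2 ≤ n) (x : ℝ)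
    (hx : x ∈ Set.Icc (0 : ℝ) (Real.exp (-Real.sqrt n))) :
    x ^ 2 * |deriv (newmanRat n) x| ≤
      4 * n * ((1 - 1 / Real.sqrt n)⁻¹) ^ 2 * Real.exp (-Real.sqrt n) := by
  obtain ⟨hx0, hxe⟩ := hx
  set s : ℝ := Real.sqrt n with hs_def
  set ξ : ℝ := Real.exp (-(1 / s)) with hξ_def
  have hn1 : (1 : ℝ) < (n : ℝ) := by exact_mod_cast Nat.lt_of_lt_of_le one_lt_two hn
  have hn0 : (0 : ℝ) < (n : ℝ) := by linarith
  have hs1 : 1 < s := by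
    rw [hs_def, show (1 : ℝ) = Real.sqrt 1 by simp]
    exact Real.sqrt_lt_sqrt zero_le_one hn1
  have hs0 : 0 < s := by linarith
  have hξ0 : 0 < ξ := Real.exp_pos _
  have hξ1 : ξ < 1 := by
    rw [hξ_def, Real.exp_lt_one_iff]
    have : 0 < 1 / s := by positivity
    linarith
  -- exp (-s) = ξ ^ n
  have hkey : Real.exp (-s) = ξ ^ n := by
    rw [hξ_def, ← Real.exp_nat_mul]
    congr 1
    rw [mul_neg, mul_one_div, hs_def, Real.div_sqrt]
  -- x is below every factor ξ^i, i < n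
  have hxi : ∀ i ∈ Finset.range n, x < ξ ^ i := by
    intro i hi
    have : ξ ^ n < ξ ^ i :=
      pow_lt_pow_right_of_lt_one₀ hξ0 hξ1 (Finset.mem_range.mp hi)
    calc x ≤ ξ ^ n := by rw [← hkey]; exact hxe
    _ < ξ ^ i := this
  -- positivity of factors
  have hfacp : ∀ i ∈ Finset.range n, 0 < x + ξ ^ i := fun i _ => by
    have := pow_pos hξ0 i; linarith
  have hfacm : ∀ i ∈ Finset.range n, 0 < -x + ξ ^ i := fun i hi => by
    have := hxi i hi; linarith
  have hPp : 0 < NewmanP n x := Finset.prod_pos hfacp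
  have hPm : 0 < NewmanP n (-x) := by
    rw [NewmanP]
    exact Finset.prod_pos hfacm
  set Pp := NewmanP n x
  set Pm := NewmanP n (-x)
  set Dp := NewmanD n x
  set Dm := NewmanD n (-x)
  have hh0 : 0 < Pp + Pm := by linarith
  -- derivative of newmanRat
  have hm : HasDerivAt (fun y : ℝ => NewmanP n (-y)) (Dm * (-1)) x :=
    (newmanP_hasDerivAt n (-x)).comp x (hasDerivAt_neg x)
  have hp : HasDerivAt (NewmanP n) Dp x := newmanP_hasDerivAt n x
  have hnum : HasDerivAt (fun y : ℝ => NewmanP n y - NewmanP n (-y))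
      (Dp - Dm * (-1)) x := hp.sub hm
  have hden : HasDerivAt (fun y : ℝ => NewmanP n y + NewmanP n (-y))
      (Dp + Dm * (-1)) x := hp.add hm
  have hr : HasDerivAt (newmanRat n)
      (((Dp - Dm * (-1)) * (Pp + Pm) - (Pp - Pm) * (Dp + Dm * (-1))) / (Pp + Pm) ^ 2) x := by
    have := hnum.div hden (ne_of_gt hh0)
    exact this
  have hderiv : deriv (newmanRat n) x
      = (2 * (Dp * Pm + Dm * Pp)) / (Pp + Pm) ^ 2 := by
    rw [hr.deriv]; ring_nf
  -- the key identity : Dp * Pm + Dm * Pp = ∑ 2 ξ^j A_j B_j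
  set A : ℕ → ℝ := fun j => ∏ i ∈ (Finset.range n).erase j, (x + ξ ^ i) with hA_def
  set B : ℕ → ℝ := fun j => ∏ i ∈ (Finset.range n).erase j, (-x + ξ ^ i) with hB_def
  have hPpj : ∀ j ∈ Finset.range n, Pp = (x + ξ ^ j) * A j := fun j hj =>
    (Finset.mul_prod_erase (Finset.range n) _ hj).symm
  have hPmj : ∀ j ∈ Finset.range n, Pm = (-x + ξ ^ j) * B j := fun j hj =>
    (Finset.mul_prod_erase (Finset.range n) _ hj).symm
  have hid : Dp * Pm + Dm * Pp = ∑ j ∈ Finset.range n, 2 * ξ ^ j * (A j * B j) := by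
    have hDp : Dp = ∑ j ∈ Finset.range n, A j := rfl
    have hDm : Dm = ∑ j ∈ Finset.range n, B j := rfl
    rw [hDp, hDm, Finset.sum_mul, Finset.sum_mul, ← Finset.sum_add_distrib]
    refine Finset.sum_congr rfl fun j hj => ?_
    rw [hPpj j hj, hPmj j hj]; ring
  -- positivity of A, B
  have hA0 : ∀ j ∈ Finset.range n, 0 < A j := fun j _ =>
    Finset.prod_pos fun i hi => hfacp i (Finset.mem_of_mem_erase hi)
  have hB0 : ∀ j ∈ Finset.range n, 0 ≤ B j := fun j _ =>
    Finset.prod_nonneg fun i hi => le_of_lt (hfacm i (Finset.mem_of_mem_erase hi))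
  have hBA : ∀ j ∈ Finset.range n, B j ≤ A j := fun j hj => by
    refine Finset.prod_le_prod (fun i hi =>
      le_of_lt (hfacm i (Finset.mem_of_mem_erase hi))) (fun i hi => by linarith [hx0])
  have hsum_nonneg : 0 ≤ ∑ j ∈ Finset.range n, 2 * ξ ^ j * (A j * B j) :=
    Finset.sum_nonneg fun j hj => by
      have := hA0 j hj; have := hB0 j hj; have := pow_pos hξ0 j; positivity
  have habs : |deriv (newmanRat n) x| = deriv (newmanRat n) x := by
    rw [abs_of_nonneg]
    rw [hderiv, hid]
    positivity
  -- main estimate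
  have hmain : x ^ 2 * deriv (newmanRat n) x ≤ 4 * n * x := by
    rw [hderiv, hid]
    have hrw : x ^ 2 * (2 * (∑ j ∈ Finset.range n, 2 * ξ ^ j * (A j * B j)) / (Pp + Pm) ^ 2)
        = ∑ j ∈ Finset.range n, x ^ 2 * (2 * (2 * ξ ^ j * (A j * B j))) / (Pp + Pm) ^ 2 := by
      rw [Finset.mul_sum, Finset.sum_div, Finset.mul_sum]
      refine Finset.sum_congr rfl fun j _ => by ring
    rw [hrw]
    have hbound : ∀ j ∈ Finset.range n,
        x ^ 2 * (2 * (2 * ξ ^ j * (A j * B j))) / (Pp + Pm) ^ 2 ≤ 4 * x := by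
      intro j hj
      have hAj := hA0 j hj
      have hBj := hB0 j hj
      have hBAj := hBA j hj
      have hξj : 0 < ξ ^ j := pow_pos hξ0 j
      have hfj : 0 < x + ξ ^ j := hfacp j hj
      rw [div_le_iff₀ (by positivity)]
      have h2 : (x + ξ ^ j) ^ 2 * A j ^ 2 ≤ (Pp + Pm) ^ 2 := by
        have : (x + ξ ^ j) * A j ≤ Pp + Pm := by
          rw [hPpj j hj] at hh0 ⊢; linarith
        calc (x + ξ ^ j) ^ 2 * A j ^ 2 = ((x + ξ ^ j) * A j) ^ 2 := by ring
        _ ≤ (Pp + Pm) ^ 2 := by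
            apply pow_le_pow_left₀ (by positivity) this
      have hxξ : x * ξ ^ j ≤ (x + ξ ^ j) ^ 2 := by nlinarith [sq_nonneg (x - ξ ^ j)]
      have h1 : x ^ 2 * (2 * (2 * ξ ^ j * (A j * B j)))
          ≤ 4 * x * ((x + ξ ^ j) ^ 2 * A j ^ 2) := by
        have e1 : x ^ 2 * (2 * (2 * ξ ^ j * (A j * B j)))
            = 4 * x * ((x * ξ ^ j) * (A j * B j)) := by ring
        rw [e1]
        have e2 : (x * ξ ^ j) * (A j * B j) ≤ (x + ξ ^ j) ^ 2 * A j ^ 2 := by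
          calc (x * ξ ^ j) * (A j * B j) ≤ (x * ξ ^ j) * (A j * A j) := by
                apply mul_le_mul_of_nonneg_left _ (by positivity)
                exact mul_le_mul_of_nonneg_left hBAj (le_of_lt hAj)
          _ ≤ (x + ξ ^ j) ^ 2 * (A j * A j) :=
                mul_le_mul_of_nonneg_right hxξ (by positivity)
          _ = (x + ξ ^ j) ^ 2 * A j ^ 2 := by ring
        exact mul_le_mul_of_nonneg_left e2 (by positivity)
      calc x ^ 2 * (2 * (2 * ξ ^ j * (A j * B j)))
          ≤ 4 * x * ((x + ξ ^ j) ^ 2 * A j ^ 2) := h1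
      _ ≤ 4 * x * (Pp + Pm) ^ 2 := mul_le_mul_of_nonneg_left h2 (by positivity)
    calc ∑ j ∈ Finset.range n, x ^ 2 * (2 * (2 * ξ ^ j * (A j * B j))) / (Pp + Pm) ^ 2
        ≤ ∑ j ∈ Finset.range n, 4 * x := Finset.sum_le_sum hbound
    _ = n * (4 * x) := by rw [Finset.sum_const, Finset.card_range, nsmul_eq_mul]
    _ = 4 * n * x := by ring
  -- conclude
  have hfin : x ^ 2 * |deriv (newmanRat n) x| ≤ 4 * n * Real.exp (-s) := by
    rw [habs]
    calc x ^ 2 * deriv (newmanRat n) x ≤ 4 * n * x := hmain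
    _ ≤ 4 * n * Real.exp (-s) := by
        apply mul_le_mul_of_nonneg_left hxe (by positivity)
  have hc : (1 : ℝ) ≤ ((1 - 1 / s)⁻¹) ^ 2 := by
    have h1 : 0 < 1 - 1 / s := by
      have : 1 / s < 1 := by rw [div_lt_one hs0]; exact hs1
      linarith
    have h2 : 1 - 1 / s ≤ 1 := by
      have : 0 < 1 / s := by positivity
      linarith
    have : (1 : ℝ) ≤ (1 - 1 / s)⁻¹ := (one_le_inv₀ h1).2 h2
    nlinarith
  calc x ^ 2 * |deriv (newmanRat n) x| ≤ 4 * n * Real.exp (-s) := hfin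
  _ = 4 * n * Real.exp (-s) * 1 := by ring
  _ ≤ 4 * n * Real.exp (-s) * ((1 - 1 / s)⁻¹) ^ 2 :=
      mul_le_mul_of_nonneg_left hc (by positivity)
  _ = 4 * n * ((1 - 1 / s)⁻¹) ^ 2 * Real.exp (-s) := by ring
  _ = 4 * n * ((1 - 1 / Real.sqrt n)⁻¹) ^ 2 * Real.exp (-Real.sqrt n) := by rw [hs_def]
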